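/- Let F be L-smooth and let x̄ = (Σ_j b_j x_j)/(Σ_j b_j) be a weighted average with b_j > 0. Then F(x̄) ≤ (Σ_j b_j F(x_j))/(Σ_j b_j) + (L/2) · max_{j,j'} ‖x_j − x_{j'}‖². -/

import Mathlib

open scoped RealInnerProductSpace


/-- Lower descent lemma from Lipschitz gradient. -/
lemma lower_descent {d : ℕ}
    (F : EuclideanSpace ℝ (Fin d) → ℝ)
    (gradF : EuclideanSpace ℝ (Fin d) → EuclideanSpace ℝ (Fin d))
    (L : ℝ) (hL : 0 ≤ L)
    (hgrad : ∀ y, HasGradientAt F (gradF y) y)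
    (hlip : ∀ y z, ‖gradF y - gradF z‖ ≤ L * ‖y - z‖)
    (y z : EuclideanSpace ℝ (Fin d)) :
    F y + ⟪gradF y, z - y⟫ - L / 2 * ‖z - y‖ ^ 2 ≤ F z := by
  set v := z - y with hv
  set g : ℝ → ℝ := fun t =>
    F (y + t • v) - ⟪gradF y, v⟫ * t + (L / 2 * ‖v‖ ^ 2) * t ^ 2 with hgdef
  have hc : ∀ t : ℝ, HasDerivAt (fun t : ℝ => y + t • v) v t := by
    intro t
    simpa using ((hasDerivAt_id t).smul_const v).const_add y
  have hg : ∀ t : ℝ, HasDerivAt g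
      (⟪gradF (y + t • v), v⟫ - ⟪gradF y, v⟫ * 1 + (L / 2 * ‖v‖ ^ 2) * (2 * t)) t := by
    intro t
    have h1 : HasDerivAt (fun t : ℝ => F (y + t • v)) ⟪gradF (y + t • v), v⟫ t := by
      have := ((hgrad (y + t • v)).hasFDerivAt).comp_hasDerivAt t (hc t)
      simpa [InnerProductSpace.toDual_apply_apply, Function.comp_def] using this
    have h2 : HasDerivAt (fun t : ℝ => ⟪gradF y, v⟫ * t) (⟪gradF y, v⟫ * 1) t :=
      (hasDerivAt_id t).const_mul _
    have h3 : HasDerivAt (fun t : ℝ => (L / 2 * ‖v‖ ^ 2) * t ^ 2)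
        ((L / 2 * ‖v‖ ^ 2) * (2 * t)) t := by
      simpa using (hasDerivAt_pow 2 t).const_mul (L / 2 * ‖v‖ ^ 2)
    exact (h1.sub h2).add h3
  have hmono : MonotoneOn g (Set.Icc 0 1) := by
    apply monotoneOn_of_deriv_nonneg (convex_Icc 0 1)
    · exact fun t _ => ((hg t).differentiableAt.continuousAt).continuousWithinAt
    · intro t ht
      exact (hg t).differentiableAt.differentiableWithinAt
    · intro t ht
      rw [interior_Icc] at ht
      rw [(hg t).deriv]
      have hineq : ⟪gradF y - gradF (y + t • v), v⟫ ≤ L * t * ‖v‖ ^ 2 := by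
        calc ⟪gradF y - gradF (y + t • v), v⟫ ≤ ‖gradF y - gradF (y + t • v)‖ * ‖v‖ :=
              real_inner_le_norm _ _
          _ ≤ (L * ‖y - (y + t • v)‖) * ‖v‖ :=
              mul_le_mul_of_nonneg_right (hlip _ _) (norm_nonneg _)
          _ = L * t * ‖v‖ ^ 2 := by
              rw [show y - (y + t • v) = -(t • v) by abel, norm_neg, norm_smul,
                Real.norm_eq_abs, abs_of_pos ht.1]
              ring
      have : ⟪gradF (y + t • v), v⟫ - ⟪gradF y, v⟫ = -⟪gradF y - gradF (y + t • v), v⟫ := by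
        rw [inner_sub_left]; ring
      nlinarith [hineq]
  have h01 := hmono (Set.left_mem_Icc.2 zero_le_one) (Set.right_mem_Icc.2 zero_le_one)
    zero_le_one
  have hg0 : g 0 = F y := by simp [hgdef]
  have hg1 : g 1 = F z - ⟪gradF y, v⟫ + L / 2 * ‖v‖ ^ 2 := by
    have hz : y + v = z := by rw [hv]; abel
    simp [hgdef, hz]
  rw [hg0, hg1] at h01
  linarith

/-- For `L`-smooth `F` and a weighted merge `x̄ = (Σ b_j x_j)/(Σ b_j)` with `b_j > 0`:
`F(x̄) ≤ (Σ b_j F(x_j))/(Σ b_j) + (L/2) max_{j,j'} ‖x_j − x_{j'}‖²`. -/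
theorem stmt10 {d m : ℕ}
    (F : EuclideanSpace ℝ (Fin d) → ℝ)
    (gradF : EuclideanSpace ℝ (Fin d) → EuclideanSpace ℝ (Fin d))
    (L : ℝ) (hL : 0 < L)
    (hgrad : ∀ y, HasGradientAt F (gradF y) y)
    (hlip : ∀ y z, ‖gradF y - gradF z‖ ≤ L * ‖y - z‖)
    (hsmooth : ∀ y z, F z ≤ F y + ⟪gradF y, z - y⟫ + L / 2 * ‖z - y‖ ^ 2)
    (x : Fin (m + 1) → EuclideanSpace ℝ (Fin d))
    (b : Fin (m + 1) → ℝ) (hb : ∀ j, 0 < b j)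
    (xbar : EuclideanSpace ℝ (Fin d))
    (hxbar : xbar = (∑ j, b j)⁻¹ • ∑ j, b j • x j) :
    F xbar ≤ (∑ j, b j * F (x j)) / (∑ j, b j) +
      L / 2 * Finset.univ.sup' Finset.univ_nonempty
        (fun p : Fin (m + 1) × Fin (m + 1) => ‖x p.1 - x p.2‖ ^ 2) := by
  set S := ∑ j, b j with hS
  have hSpos : 0 < S := Finset.sum_pos (fun j _ => hb j) Finset.univ_nonempty
  set g := gradF xbar with hgdef
  set D2 := Finset.univ.sup' Finset.univ_nonempty
      (fun p : Fin (m + 1) × Fin (m + 1) => ‖x p.1 - x p.2‖ ^ 2) with hD2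
  set M := Finset.univ.sup' Finset.univ_nonempty
      (fun p : Fin (m + 1) × Fin (m + 1) => ‖x p.1 - x p.2‖) with hM
  have hM2 : M ^ 2 ≤ D2 := by
    obtain ⟨p0, -, hp0⟩ := Finset.exists_mem_eq_sup' (Finset.univ_nonempty)
      (fun p : Fin (m + 1) × Fin (m + 1) => ‖x p.1 - x p.2‖)
    rw [hM, hp0]
    exact Finset.le_sup' (fun p : Fin (m + 1) × Fin (m + 1) => ‖x p.1 - x p.2‖ ^ 2)
      (Finset.mem_univ p0)
  have hnorm : ∀ j, ‖x j - xbar‖ ≤ M := by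
    intro j
    have hrep : x j - xbar = S⁻¹ • ∑ k, b k • (x j - x k) := by
      have h1 : ∑ k, b k • (x j - x k) = S • x j - ∑ k, b k • x k := by
        simp [smul_sub, Finset.sum_sub_distrib, ← Finset.sum_smul, hS]
      rw [h1, smul_sub, inv_smul_smul₀ hSpos.ne', hxbar, hS]
    rw [hrep, norm_smul, Real.norm_eq_abs, abs_of_pos (inv_pos.2 hSpos)]
    have h2 : ‖∑ k, b k • (x j - x k)‖ ≤ ∑ k, b k * M := by
      refine (norm_sum_le _ _).trans (Finset.sum_le_sum fun k _ => ?_)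
      rw [norm_smul, Real.norm_eq_abs, abs_of_pos (hb k)]
      exact mul_le_mul_of_nonneg_left
        (Finset.le_sup' (fun p : Fin (m + 1) × Fin (m + 1) => ‖x p.1 - x p.2‖)
          (Finset.mem_univ (j, k))) (hb k).le
    have h4 : (∑ k, b k * M) = S * M := by rw [hS, Finset.sum_mul]
    calc S⁻¹ * ‖∑ k, b k • (x j - x k)‖ ≤ S⁻¹ * (S * M) := by
          rw [← h4]
          exact mul_le_mul_of_nonneg_left h2 (inv_pos.2 hSpos).le
      _ = M := by field_simp
  have hsq : ∀ j, ‖x j - xbar‖ ^ 2 ≤ D2 := fun j =>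
    le_trans (pow_le_pow_left₀ (norm_nonneg _) (hnorm j) 2) hM2
  have hzero : ∑ j, b j • (x j - xbar) = (0 : EuclideanSpace ℝ (Fin d)) := by
    have h1 : ∑ j, b j • (x j - xbar) = (∑ j, b j • x j) - S • xbar := by
      simp [smul_sub, Finset.sum_sub_distrib, ← Finset.sum_smul, hS]
    rw [h1, hxbar, hS, smul_inv_smul₀ hSpos.ne', sub_self]
  have hinner : ∑ j, b j * ⟪g, x j - xbar⟫ = 0 := by
    have : ∑ j, b j * ⟪g, x j - xbar⟫ = ⟪g, ∑ j, b j • (x j - xbar)⟫ := by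
      rw [inner_sum]
      exact Finset.sum_congr rfl fun j _ => (real_inner_smul_right g _ (b j)).symm
    rw [this, hzero, inner_zero_right]
  have h1 : ∀ j, F xbar + ⟪g, x j - xbar⟫ - L / 2 * D2 ≤ F (x j) := by
    intro j
    have hl := lower_descent F gradF L hL.le hgrad hlip xbar (x j)
    have hq : L / 2 * ‖x j - xbar‖ ^ 2 ≤ L / 2 * D2 :=
      mul_le_mul_of_nonneg_left (hsq j) (by positivity)
    linarith
  have h2 : ∑ j, b j * (F xbar + ⟪g, x j - xbar⟫ - L / 2 * D2) ≤ ∑ j, b j * F (x j) :=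
    Finset.sum_le_sum fun j _ => mul_le_mul_of_nonneg_left (h1 j) (hb j).le
  have h3 : ∑ j, b j * (F xbar + ⟪g, x j - xbar⟫ - L / 2 * D2)
      = S * F xbar - L / 2 * D2 * S := by
    have : ∀ j, b j * (F xbar + ⟪g, x j - xbar⟫ - L / 2 * D2)
        = b j * F xbar + b j * ⟪g, x j - xbar⟫ - L / 2 * D2 * b j := fun j => by ring
    rw [Finset.sum_congr rfl fun j _ => this j]
    rw [Finset.sum_sub_distrib, Finset.sum_add_distrib, hinner, ← Finset.sum_mul,
      ← Finset.mul_sum, hS]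
    ring
  rw [h3] at h2
  rw [← sub_le_iff_le_add, le_div_iff₀ hSpos]
  nlinarith [h2]
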